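/- For every fixed positive real r, every finite interval order having a representation by closed intervals each of length 0 or length r has order dimension at most 3. -/

import Mathlib

namespace Stmt8Aux

/-- Strict lexicographic comparison on `ℝ⁴`, via `Prod.Lex`. -/
def enc (p : ℝ × ℝ × ℝ × ℝ) : ℝ ×ₗ (ℝ ×ₗ (ℝ ×ₗ ℝ)) :=
  toLex (p.1, toLex (p.2.1, toLex (p.2.2.1, p.2.2.2)))

def klt (p q : ℝ × ℝ × ℝ × ℝ) : Prop := enc p < enc q

lemma klt_trans {p q r : ℝ × ℝ × ℝ × ℝ} (h1 : klt p q) (h2 : klt q r) : klt p r :=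
  lt_trans h1 h2

lemma klt_asymm {p q : ℝ × ℝ × ℝ × ℝ} (h1 : klt p q) (h2 : klt q p) : False :=
  absurd h2 (lt_asymm h1)

lemma klt_irrefl {p : ℝ × ℝ × ℝ × ℝ} (h : klt p p) : False := lt_irrefl _ h

lemma enc_inj {p q : ℝ × ℝ × ℝ × ℝ} (h : enc p = enc q) : p = q := by
  obtain ⟨a1, b1, c1, d1⟩ := p
  obtain ⟨a2, b2, c2, d2⟩ := q
  simp only [enc, toLex_inj, Prod.mk.injEq] at h
  obtain ⟨h1, h2, h3, h4⟩ := h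
  simp [h1, h2, h3, h4]

lemma klt_trichotomy (p q : ℝ × ℝ × ℝ × ℝ) : klt p q ∨ p = q ∨ klt q p := by
  rcases lt_trichotomy (enc p) (enc q) with h | h | h
  · exact Or.inl h
  · exact Or.inr (Or.inl (enc_inj h))
  · exact Or.inr (Or.inr h)

lemma klt_iff {p q : ℝ × ℝ × ℝ × ℝ} :
    klt p q ↔ p.1 < q.1 ∨ (p.1 = q.1 ∧ (p.2.1 < q.2.1 ∨ (p.2.1 = q.2.1 ∧
      (p.2.2.1 < q.2.2.1 ∨ (p.2.2.1 = q.2.2.1 ∧ p.2.2.2 < q.2.2.2))))) := by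
  simp only [klt, enc, Prod.Lex.lt_iff, toLex_inj, Prod.mk.injEq, ofLex_toLex]

lemma klt_of_lt1 {p q : ℝ × ℝ × ℝ × ℝ} (h : p.1 < q.1) : klt p q :=
  klt_iff.mpr (Or.inl h)

lemma klt_of_lt2 {p q : ℝ × ℝ × ℝ × ℝ} (h1 : p.1 = q.1) (h : p.2.1 < q.2.1) : klt p q :=
  klt_iff.mpr (Or.inr ⟨h1, Or.inl h⟩)

lemma klt_of_lt3 {p q : ℝ × ℝ × ℝ × ℝ} (h1 : p.1 = q.1) (h2 : p.2.1 = q.2.1)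
    (h : p.2.2.1 < q.2.2.1) : klt p q :=
  klt_iff.mpr (Or.inr ⟨h1, Or.inr ⟨h2, Or.inl h⟩⟩)

lemma klt_of_lt4 {p q : ℝ × ℝ × ℝ × ℝ} (h1 : p.1 = q.1) (h2 : p.2.1 = q.2.1)
    (h3 : p.2.2.1 = q.2.2.1) (h : p.2.2.2 < q.2.2.2) : klt p q :=
  klt_iff.mpr (Or.inr ⟨h1, Or.inr ⟨h2, Or.inr ⟨h3, h⟩⟩⟩)

/-- Greedy block starts: a finite set of reals that is `1`-spread and covers `UL`. -/
lemma exists_ST (UL : Finset ℝ) :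
    ∃ ST : Finset ℝ, ST ⊆ UL ∧
      (∀ s ∈ ST, ∀ t ∈ ST, s < t → s + 1 < t) ∧
      (∀ x ∈ UL, ∃ s ∈ ST, s ≤ x ∧ x ≤ s + 1) := by
  induction UL using Finset.strongInductionOn with
  | _ UL ih =>
    rcases UL.eq_empty_or_nonempty with rfl | hne
    · exact ⟨∅, by simp, by simp, by simp⟩
    · set m := UL.min' hne with hm
      set UL' := UL.filter (fun x => m + 1 < x) with hUL'
      have hss : UL' ⊂ UL := by
        refine Finset.filter_ssubset.mpr ⟨m, UL.min'_mem hne, by simp⟩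
      obtain ⟨ST', hsub', hsp', hcov'⟩ := ih UL' hss
      refine ⟨insert m ST', ?_, ?_, ?_⟩
      · intro s hs
        rcases Finset.mem_insert.mp hs with rfl | hs
        · exact UL.min'_mem hne
        · exact (Finset.filter_subset _ _) (hsub' hs)
      · intro s hs t ht hst
        rcases Finset.mem_insert.mp hs with rfl | hs <;>
          rcases Finset.mem_insert.mp ht with rfl | ht
        · exact absurd hst (lt_irrefl _)
        · exact (Finset.mem_filter.mp (hsub' ht)).2
        · have : m ≤ s := UL.min'_le _ ((Finset.filter_subset _ _) (hsub' hs))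
          exact absurd hst (not_lt.mpr this)
        · exact hsp' s hs t ht hst
      · intro x hx
        by_cases hx' : m + 1 < x
        · obtain ⟨s, hs, h1, h2⟩ := hcov' x (Finset.mem_filter.mpr ⟨hx, hx'⟩)
          exact ⟨s, Finset.mem_insert_of_mem hs, h1, h2⟩
        · exact ⟨m, Finset.mem_insert_self _ _, UL.min'_le _ hx, not_lt.mp hx'⟩

/-! ### The `τ` function counting block starts below a value -/

noncomputable def tauf (ST : Finset ℝ) (v : ℝ) : ℕ := (ST.filter (fun s => s ≤ v)).card

lemma tauf_mono (ST : Finset ℝ) {v w : ℝ} (h : v ≤ w) : tauf ST v ≤ tauf ST w :=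
  Finset.card_le_card (Finset.monotone_filter_right _ (fun s _ hs => le_trans hs h))

lemma tauf_lt_of_between (ST : Finset ℝ) {v w s : ℝ} (hs : s ∈ ST) (h1 : v < s)
    (h2 : s ≤ w) : tauf ST v < tauf ST w := by
  refine Finset.card_lt_card ⟨Finset.monotone_filter_right _
    (fun t _ ht => le_trans ht (le_trans (le_of_lt h1) h2)), fun hsub => ?_⟩
  have hmem : s ∈ ST.filter (fun t => t ≤ w) := Finset.mem_filter.mpr ⟨hs, h2⟩
  have := Finset.mem_filter.mp (hsub hmem)
  exact absurd this.2 (not_le.mpr h1)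

lemma tauf_pos (ST : Finset ℝ) {x s : ℝ} (hs : s ∈ ST) (h1 : s ≤ x) :
    1 ≤ tauf ST x := by
  have : s ∈ ST.filter (fun t => t ≤ x) := Finset.mem_filter.mpr ⟨hs, h1⟩
  exact Finset.card_pos.mpr ⟨s, this⟩

/-- If consecutive starts are more than 1 apart, then going up by at most 1 adds
at most one start. -/
lemma tauf_gapbound (ST : Finset ℝ)
    (hsp : ∀ s ∈ ST, ∀ t ∈ ST, s < t → s + 1 < t)
    {x v : ℝ} (h : v ≤ x + 1) : tauf ST v ≤ tauf ST x + 1 := by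
  rcases le_or_gt v x with hvx | hvx
  · exact le_trans (tauf_mono ST hvx) (Nat.le_succ _)
  · have hsub : ST.filter (fun s => s ≤ x) ⊆ ST.filter (fun s => s ≤ v) :=
      Finset.monotone_filter_right _ (fun s _ hs => le_trans hs (le_of_lt hvx))
    have hcard : (ST.filter (fun s => s ≤ v) \ ST.filter (fun s => s ≤ x)).card ≤ 1 := by
      refine Finset.card_le_one.mpr ?_
      intro a ha b hb
      have ha' := Finset.mem_sdiff.mp ha
      have hb' := Finset.mem_sdiff.mp hb
      have hax : x < a := by
        by_contra hle
        exact ha'.2 (Finset.mem_filter.mpr ⟨(Finset.mem_filter.mp ha'.1).1, not_lt.mp hle⟩)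
      have hbx : x < b := by
        by_contra hle
        exact hb'.2 (Finset.mem_filter.mpr ⟨(Finset.mem_filter.mp hb'.1).1, not_lt.mp hle⟩)
      have haST := (Finset.mem_filter.mp ha'.1).1
      have hbST := (Finset.mem_filter.mp hb'.1).1
      have hav : a ≤ v := (Finset.mem_filter.mp ha'.1).2
      have hbv : b ≤ v := (Finset.mem_filter.mp hb'.1).2
      by_contra hab
      rcases lt_or_gt_of_ne hab with hlt | hgt
      · have := hsp a haST b hbST hlt
        linarith
      · have := hsp b hbST a haST hgt
        linarith
    have := Finset.card_sdiff_add_card_eq_card hsub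
    unfold tauf
    omega


/-! ### The three key functions -/

section Keys

variable {X : Type*} (a : X → ℝ) (uu : X → Prop) [DecidablePred uu] (k : X → ℝ)
  (ST : Finset ℝ)

/-- `v` is in the "low" part of its block (or below all blocks). -/
def lowP (v : ℝ) : Prop :=
  (ST.filter (fun s => v - 1 ≤ s ∧ s ≤ v)).Nonempty ∨ tauf ST v = 0

noncomputable def lb (v : ℝ) : ℝ := @ite ℝ (lowP ST v) (Classical.propDecidable _) 0 2⁻¹

lemma lb_nonneg (v : ℝ) : 0 ≤ lb ST v := by
  unfold lb; split_ifs <;> norm_num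

lemma lb_le (v : ℝ) : lb ST v ≤ 2⁻¹ := by
  unfold lb; split_ifs <;> norm_num

lemma lb_eq_zero {v : ℝ} (h : lowP ST v) : lb ST v = 0 := by
  unfold lb; exact if_pos h

lemma lb_eq_half {v : ℝ} (h : ¬ lowP ST v) : lb ST v = 2⁻¹ := by
  unfold lb; exact if_neg h

noncomputable def K1 (x : X) : ℝ × ℝ × ℝ × ℝ :=
  ((tauf ST (a x) : ℝ) + (if uu x then 4⁻¹ else lb ST (a x)),
   if uu x then -(a x) else a x,
   -(k x), 0)

noncomputable def K2 (x : X) : ℝ × ℝ × ℝ × ℝ :=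
  ((((tauf ST (a x) + 1) / 2 : ℕ) : ℝ),
   if uu x then (if tauf ST (a x) % 2 = 0 then a x - 1 else a x) else a x - 1,
   if uu x then (if tauf ST (a x) % 2 = 0 then (0:ℝ) else 2) else 1,
   k x)

noncomputable def K3 (x : X) : ℝ × ℝ × ℝ × ℝ :=
  (((tauf ST (a x) / 2 : ℕ) : ℝ),
   if uu x then (if tauf ST (a x) % 2 = 1 then a x - 1 else a x) else a x - 1,
   if uu x then (if tauf ST (a x) % 2 = 1 then (0:ℝ) else 2) else 1,
   k x)

variable (hsp : ∀ s ∈ ST, ∀ t ∈ ST, s < t → s + 1 < t)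
variable (hcov : ∀ x : X, uu x → ∃ s ∈ ST, s ≤ a x ∧ a x ≤ s + 1)

section TauHelpers
include hcov

lemma tau_strict {v : ℝ} {y : X} (hy : uu y) (h : v + 1 < a y) :
    tauf ST v < tauf ST (a y) := by
  obtain ⟨s, hs, hs1, hs2⟩ := hcov y hy
  exact tauf_lt_of_between ST hs (by linarith) hs1

lemma tau_pos' {y : X} (hy : uu y) : 1 ≤ tauf ST (a y) := by
  obtain ⟨s, hs, hs1, _⟩ := hcov y hy
  exact tauf_pos ST hs hs1

lemma notlowP {x : X} (hx : uu x) {v : ℝ} (h : a x + 1 < v)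
    (he : tauf ST v = tauf ST (a x)) : ¬ lowP ST v := by
  rintro (⟨s, hs⟩ | h0)
  · obtain ⟨hsST, hs1, hs2⟩ := Finset.mem_filter.mp hs |>.imp id (fun p => p)
    have : tauf ST (a x) < tauf ST v := tauf_lt_of_between ST hsST (by linarith) hs2
    omega
  · have := tau_pos' a uu ST hcov hx
    omega

lemma lowP_of {y : X} (hy : uu y) {v : ℝ} (h : v < a y)
    (he : tauf ST v = tauf ST (a y)) : lowP ST v := by
  obtain ⟨s, hs, hs1, hs2⟩ := hcov y hy
  left
  refine ⟨s, Finset.mem_filter.mpr ⟨hs, by linarith, ?_⟩⟩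
  by_contra hle
  have : tauf ST v < tauf ST (a y) := tauf_lt_of_between ST hs (not_le.mp hle) hs1
  omega

end TauHelpers

lemma lowP_down {v w : ℝ} (h : v < w) (he : tauf ST v = tauf ST w)
    (hw : lowP ST w) : lowP ST v := by
  rcases hw with ⟨s, hs⟩ | h0
  · obtain ⟨hsST, hs1, hs2⟩ := Finset.mem_filter.mp hs |>.imp id (fun p => p)
    left
    refine ⟨s, Finset.mem_filter.mpr ⟨hsST, by linarith, ?_⟩⟩
    by_contra hle
    have : tauf ST v < tauf ST w := tauf_lt_of_between ST hsST (not_le.mp hle) hs2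
    omega
  · right; omega

/-! ### Extension lemmas: each key is strictly monotone on the strict order -/

lemma keyE1 (hcov : ∀ x : X, uu x → ∃ s ∈ ST, s ≤ a x ∧ a x ≤ s + 1)
    {x y : X} (hxy : a x + (if uu x then (1:ℝ) else 0) < a y) :
    klt (K1 a uu k ST x) (K1 a uu k ST y) := by
  by_cases hx : uu x
  · have h1 : a x + 1 < a y := by simpa [hx] using hxy
    by_cases hy : uu y
    · -- unit-unit
      have ht : tauf ST (a x) < tauf ST (a y) := tau_strict a uu ST hcov hy h1
      apply klt_of_lt1
      simp only [K1, hx, hy, if_true]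
      have : (tauf ST (a x) : ℝ) < tauf ST (a y) := by exact_mod_cast ht
      linarith
    · -- unit-point
      have hle : tauf ST (a x) ≤ tauf ST (a y) := tauf_mono ST (by linarith)
      apply klt_of_lt1
      simp only [K1, hx, hy, if_true, if_false]
      rcases lt_or_eq_of_le hle with hlt | heq
      · have h2 : (tauf ST (a x) : ℝ) + 1 ≤ tauf ST (a y) := by exact_mod_cast hlt
        have := lb_nonneg ST (a y)
        linarith
      · have hnl : ¬ lowP ST (a y) := notlowP a uu ST hcov hx h1 heq.symm
        rw [lb_eq_half ST hnl, heq]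
        norm_num
  · have h1 : a x < a y := by simpa [hx] using hxy
    have hle : tauf ST (a x) ≤ tauf ST (a y) := tauf_mono ST (le_of_lt h1)
    by_cases hy : uu y
    · -- point-unit
      apply klt_of_lt1
      simp only [K1, hx, hy, if_true, if_false]
      rcases lt_or_eq_of_le hle with hlt | heq
      · have h2 : (tauf ST (a x) : ℝ) + 1 ≤ tauf ST (a y) := by exact_mod_cast hlt
        have := lb_le ST (a x)
        linarith
      · have hl : lowP ST (a x) := lowP_of a uu ST hcov hy h1 heq
        rw [lb_eq_zero ST hl, heq]
        norm_num
    · -- point-point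
      rcases lt_or_eq_of_le hle with hlt | heq
      · apply klt_of_lt1
        simp only [K1, hx, hy, if_false]
        have h2 : (tauf ST (a x) : ℝ) + 1 ≤ tauf ST (a y) := by exact_mod_cast hlt
        have := lb_le ST (a x)
        have := lb_nonneg ST (a y)
        linarith
      · by_cases hpy : lowP ST (a y)
        · have hpx : lowP ST (a x) := lowP_down ST h1 heq hpy
          refine klt_of_lt2 ?_ ?_ <;>
            simp only [K1, hx, hy, if_false]
          · rw [lb_eq_zero ST hpx, lb_eq_zero ST hpy, heq]
          · exact h1
        · by_cases hpx : lowP ST (a x)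
          · apply klt_of_lt1
            simp only [K1, hx, hy, if_false]
            rw [lb_eq_zero ST hpx, lb_eq_half ST hpy, heq]
            norm_num
          · refine klt_of_lt2 ?_ ?_ <;>
              simp only [K1, hx, hy, if_false]
            · rw [lb_eq_half ST hpx, lb_eq_half ST hpy, heq]
            · exact h1

lemma keyE2 (hcov : ∀ x : X, uu x → ∃ s ∈ ST, s ≤ a x ∧ a x ≤ s + 1)
    {x y : X} (hxy : a x + (if uu x then (1:ℝ) else 0) < a y) :
    klt (K2 a uu k ST x) (K2 a uu k ST y) := by
  set bx := tauf ST (a x) with hbx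
  set by' := tauf ST (a y) with hby
  by_cases hx : uu x
  · have h1 : a x + 1 < a y := by simpa [hx] using hxy
    by_cases hy : uu y
    · -- unit-unit
      have ht : bx < by' := tau_strict a uu ST hcov hy h1
      rcases Nat.lt_or_ge ((bx + 1) / 2) ((by' + 1) / 2) with hg | hg
      · apply klt_of_lt1
        simp only [K2, ← hbx, ← hby]
        exact_mod_cast hg
      · have heq : (bx + 1) / 2 = (by' + 1) / 2 ∧ by' = bx + 1 ∧ bx % 2 = 1 := by
          constructor
          · omega
          · constructor <;> omega
        refine klt_of_lt2 ?_ ?_ <;> simp only [K2, ← hbx, ← hby, hx, hy, if_true]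
        · exact_mod_cast congrArg (Nat.cast : ℕ → ℝ) heq.1
        · have hbxodd : ¬ (bx % 2 = 0) := by omega
          have hbyeven : by' % 2 = 0 := by omega
          rw [if_neg hbxodd, if_pos hbyeven]
          linarith
    · -- unit-point
      have hle : bx ≤ by' := tauf_mono ST (by linarith)
      rcases Nat.lt_or_ge ((bx + 1) / 2) ((by' + 1) / 2) with hg | hg
      · apply klt_of_lt1
        simp only [K2, ← hbx, ← hby]
        exact_mod_cast hg
      · have heq : (bx + 1) / 2 = (by' + 1) / 2 := by omega
        refine klt_of_lt2 ?_ ?_ <;> simp only [K2, ← hbx, ← hby, hx, hy, if_true, if_false]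
        · exact_mod_cast congrArg (Nat.cast : ℕ → ℝ) heq
        · split_ifs <;> linarith
  · have h1 : a x < a y := by simpa [hx] using hxy
    have hle : bx ≤ by' := tauf_mono ST (le_of_lt h1)
    rcases Nat.lt_or_ge ((bx + 1) / 2) ((by' + 1) / 2) with hg | hg
    · apply klt_of_lt1
      simp only [K2, ← hbx, ← hby]
      exact_mod_cast hg
    · have heq : (bx + 1) / 2 = (by' + 1) / 2 := by omega
      refine klt_of_lt2 ?_ ?_ <;> simp only [K2, ← hbx, ← hby, hx, if_false]
      · exact_mod_cast congrArg (Nat.cast : ℕ → ℝ) heq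
      · by_cases hy : uu y <;> simp only [hy, if_true, if_false] <;>
          [skip; linarith]
        split_ifs <;> linarith

lemma keyE3 (hcov : ∀ x : X, uu x → ∃ s ∈ ST, s ≤ a x ∧ a x ≤ s + 1)
    {x y : X} (hxy : a x + (if uu x then (1:ℝ) else 0) < a y) :
    klt (K3 a uu k ST x) (K3 a uu k ST y) := by
  set bx := tauf ST (a x) with hbx
  set by' := tauf ST (a y) with hby
  by_cases hx : uu x
  · have h1 : a x + 1 < a y := by simpa [hx] using hxy
    by_cases hy : uu y
    · -- unit-unit
      have ht : bx < by' := tau_strict a uu ST hcov hy h1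
      rcases Nat.lt_or_ge (bx / 2) (by' / 2) with hg | hg
      · apply klt_of_lt1
        simp only [K3, ← hbx, ← hby]
        exact_mod_cast hg
      · have heq : bx / 2 = by' / 2 ∧ by' = bx + 1 ∧ bx % 2 = 0 := by
          constructor
          · omega
          · constructor <;> omega
        refine klt_of_lt2 ?_ ?_ <;> simp only [K3, ← hbx, ← hby, hx, hy, if_true]
        · exact_mod_cast congrArg (Nat.cast : ℕ → ℝ) heq.1
        · have hbxeven : ¬ (bx % 2 = 1) := by omega
          have hbyodd : by' % 2 = 1 := by omega
          rw [if_neg hbxeven, if_pos hbyodd]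
          linarith
    · -- unit-point
      have hle : bx ≤ by' := tauf_mono ST (by linarith)
      rcases Nat.lt_or_ge (bx / 2) (by' / 2) with hg | hg
      · apply klt_of_lt1
        simp only [K3, ← hbx, ← hby]
        exact_mod_cast hg
      · have heq : bx / 2 = by' / 2 := by omega
        refine klt_of_lt2 ?_ ?_ <;> simp only [K3, ← hbx, ← hby, hx, hy, if_true, if_false]
        · exact_mod_cast congrArg (Nat.cast : ℕ → ℝ) heq
        · split_ifs <;> linarith
  · have h1 : a x < a y := by simpa [hx] using hxy
    have hle : bx ≤ by' := tauf_mono ST (le_of_lt h1)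
    rcases Nat.lt_or_ge (bx / 2) (by' / 2) with hg | hg
    · apply klt_of_lt1
      simp only [K3, ← hbx, ← hby]
      exact_mod_cast hg
    · have heq : bx / 2 = by' / 2 := by omega
      refine klt_of_lt2 ?_ ?_ <;> simp only [K3, ← hbx, ← hby, hx, if_false]
      · exact_mod_cast congrArg (Nat.cast : ℕ → ℝ) heq
      · by_cases hy : uu y <;> simp only [hy, if_true, if_false] <;>
          [skip; linarith]
        split_ifs <;> linarith

end Keys


/-! ### Coverage: every incomparable pair is reversed by one of the keys -/

lemma keyC {X : Type*} (a : X → ℝ) (uu : X → Prop) [DecidablePred uu] (k : X → ℝ)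
    (ST : Finset ℝ)
    (hsp' : ∀ s ∈ ST, ∀ t ∈ ST, s < t → s + 1 < t)
    (hcov' : ∀ x : X, uu x → ∃ s ∈ ST, s ≤ a x ∧ a x ≤ s + 1)
    {x y : X}
    (hnxy : ¬ (a x + (if uu x then (1:ℝ) else 0) < a y))
    (hnyx : ¬ (a y + (if uu y then (1:ℝ) else 0) < a x))
    (hk : k x ≠ k y) :
    klt (K1 a uu k ST y) (K1 a uu k ST x) ∨ klt (K2 a uu k ST y) (K2 a uu k ST x) ∨
      klt (K3 a uu k ST y) (K3 a uu k ST x) := by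
  by_cases hx : uu x
  · by_cases hy : uu y
    · -- unit-unit
      have h1 : a y ≤ a x + 1 := not_lt.mp (by simpa [hx] using hnxy)
      have h2 : a x ≤ a y + 1 := not_lt.mp (by simpa [hy] using hnyx)
      have hb1 : tauf ST (a y) ≤ tauf ST (a x) + 1 := tauf_gapbound ST hsp' h1
      have hb2 : tauf ST (a x) ≤ tauf ST (a y) + 1 := tauf_gapbound ST hsp' h2
      rcases (show tauf ST (a y) = tauf ST (a x) ∨ tauf ST (a y) = tauf ST (a x) + 1 ∨
          tauf ST (a x) = tauf ST (a y) + 1 by omega) with hcase | hcase | hcase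
      · -- same block
        rcases lt_trichotomy (a x) (a y) with hA | hA | hA
        · left
          refine klt_of_lt2 ?_ ?_ <;> simp only [K1, hx, hy, if_true]
          · rw [hcase]
          · simpa using hA
        · rcases lt_or_gt_of_ne hk with hK | hK
          · left
            refine klt_of_lt3 ?_ ?_ ?_ <;> simp only [K1, hx, hy, if_true]
            · rw [hcase]
            · rw [hA]
            · simpa using hK
          · right; left
            refine klt_of_lt4 ?_ ?_ ?_ ?_ <;> simp only [K2, hx, hy, if_true]
            · rw [hcase]
            · rw [hcase, hA]
            · rw [hcase]
            · exact hK
        · right; left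
          refine klt_of_lt2 ?_ ?_ <;> simp only [K2, hx, hy, if_true]
          · rw [hcase]
          · rw [hcase]
            split_ifs <;> linarith
      · -- y in the next block
        rcases Nat.mod_two_eq_zero_or_one (tauf ST (a x)) with hp | hp
        · right; right
          have e1 : (tauf ST (a y)) / 2 = (tauf ST (a x)) / 2 := by omega
          have e2 : (tauf ST (a y)) % 2 = 1 := by omega
          have e3 : ¬ ((tauf ST (a x)) % 2 = 1) := by omega
          rcases lt_or_eq_of_le (show a y - 1 ≤ a x by linarith) with hlt | heq
          · refine klt_of_lt2 ?_ ?_ <;> simp only [K3, hx, hy, if_true]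
            · exact_mod_cast congrArg (Nat.cast : ℕ → ℝ) e1
            · rw [if_pos e2, if_neg e3]; exact hlt
          · refine klt_of_lt3 ?_ ?_ ?_ <;> simp only [K3, hx, hy, if_true]
            · exact_mod_cast congrArg (Nat.cast : ℕ → ℝ) e1
            · rw [if_pos e2, if_neg e3]; exact heq
            · rw [if_pos e2, if_neg e3]; norm_num
        · right; left
          have e1 : (tauf ST (a y) + 1) / 2 = (tauf ST (a x) + 1) / 2 := by omega
          have e2 : (tauf ST (a y)) % 2 = 0 := by omega
          have e3 : ¬ ((tauf ST (a x)) % 2 = 0) := by omega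
          rcases lt_or_eq_of_le (show a y - 1 ≤ a x by linarith) with hlt | heq
          · refine klt_of_lt2 ?_ ?_ <;> simp only [K2, hx, hy, if_true]
            · exact_mod_cast congrArg (Nat.cast : ℕ → ℝ) e1
            · rw [if_pos e2, if_neg e3]; exact hlt
          · refine klt_of_lt3 ?_ ?_ ?_ <;> simp only [K2, hx, hy, if_true]
            · exact_mod_cast congrArg (Nat.cast : ℕ → ℝ) e1
            · rw [if_pos e2, if_neg e3]; exact heq
            · rw [if_pos e2, if_neg e3]; norm_num
      · -- x in the next block: K1 ascends in τ
        left
        apply klt_of_lt1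
        simp only [K1, hx, hy, if_true]
        have : (tauf ST (a y) : ℝ) + 1 ≤ tauf ST (a x) := by exact_mod_cast Nat.le_of_eq hcase.symm
        linarith
    · -- x unit, y point: need the point before the unit in K2 (τ(a x) odd) or K3 (even)
      have h1 : a y ≤ a x + 1 := not_lt.mp (by simpa [hx] using hnxy)
      have h2 : a x ≤ a y := not_lt.mp (by simpa [hy] using hnyx)
      have hb1 : tauf ST (a x) ≤ tauf ST (a y) := tauf_mono ST h2
      have hb2 : tauf ST (a y) ≤ tauf ST (a x) + 1 := tauf_gapbound ST hsp' h1
      rcases Nat.mod_two_eq_zero_or_one (tauf ST (a x)) with hp | hp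
      · right; right
        have e1 : (tauf ST (a y)) / 2 = (tauf ST (a x)) / 2 := by omega
        have e3 : ¬ ((tauf ST (a x)) % 2 = 1) := by omega
        rcases lt_or_eq_of_le (show a y - 1 ≤ a x by linarith) with hlt | heq
        · refine klt_of_lt2 ?_ ?_ <;> simp only [K3, hx, hy, if_true, if_false]
          · exact_mod_cast congrArg (Nat.cast : ℕ → ℝ) e1
          · rw [if_neg e3]; exact hlt
        · refine klt_of_lt3 ?_ ?_ ?_ <;> simp only [K3, hx, hy, if_true, if_false]
          · exact_mod_cast congrArg (Nat.cast : ℕ → ℝ) e1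
          · rw [if_neg e3]; exact heq
          · rw [if_neg e3]; norm_num
      · right; left
        have e1 : (tauf ST (a y) + 1) / 2 = (tauf ST (a x) + 1) / 2 := by omega
        have e3 : ¬ ((tauf ST (a x)) % 2 = 0) := by omega
        rcases lt_or_eq_of_le (show a y - 1 ≤ a x by linarith) with hlt | heq
        · refine klt_of_lt2 ?_ ?_ <;> simp only [K2, hx, hy, if_true, if_false]
          · exact_mod_cast congrArg (Nat.cast : ℕ → ℝ) e1
          · rw [if_neg e3]; exact hlt
        · refine klt_of_lt3 ?_ ?_ ?_ <;> simp only [K2, hx, hy, if_true, if_false]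
          · exact_mod_cast congrArg (Nat.cast : ℕ → ℝ) e1
          · rw [if_neg e3]; exact heq
          · rw [if_neg e3]; norm_num
  · by_cases hy : uu y
    · -- x point, y unit: need the unit before the point in K3 (τ(a y) odd) or K2 (even)
      have h1 : a y ≤ a x := not_lt.mp (by simpa [hx] using hnxy)
      have h2 : a x ≤ a y + 1 := not_lt.mp (by simpa [hy] using hnyx)
      have hb1 : tauf ST (a y) ≤ tauf ST (a x) := tauf_mono ST h1
      have hb2 : tauf ST (a x) ≤ tauf ST (a y) + 1 := tauf_gapbound ST hsp' h2
      rcases Nat.mod_two_eq_zero_or_one (tauf ST (a y)) with hp | hp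
      · right; left
        rcases (show tauf ST (a x) = tauf ST (a y) ∨ tauf ST (a x) = tauf ST (a y) + 1
            by omega) with hcase | hcase
        · have e1 : (tauf ST (a y) + 1) / 2 = (tauf ST (a x) + 1) / 2 := by omega
          have e2 : (tauf ST (a y)) % 2 = 0 := hp
          rcases lt_or_eq_of_le (show a y - 1 ≤ a x - 1 by linarith) with hlt | heq
          · refine klt_of_lt2 ?_ ?_ <;> simp only [K2, hx, hy, if_true, if_false]
            · exact_mod_cast congrArg (Nat.cast : ℕ → ℝ) e1
            · rw [if_pos e2]; exact hlt
          · refine klt_of_lt3 ?_ ?_ ?_ <;> simp only [K2, hx, hy, if_true, if_false]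
            · exact_mod_cast congrArg (Nat.cast : ℕ → ℝ) e1
            · rw [if_pos e2]; exact heq
            · rw [if_pos e2]; norm_num
        · apply klt_of_lt1
          simp only [K2, hx, hy]
          have e1 : (tauf ST (a y) + 1) / 2 < (tauf ST (a x) + 1) / 2 := by omega
          exact_mod_cast e1
      · right; right
        rcases (show tauf ST (a x) = tauf ST (a y) ∨ tauf ST (a x) = tauf ST (a y) + 1
            by omega) with hcase | hcase
        · have e1 : (tauf ST (a y)) / 2 = (tauf ST (a x)) / 2 := by omega
          have e2 : (tauf ST (a y)) % 2 = 1 := hp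
          rcases lt_or_eq_of_le (show a y - 1 ≤ a x - 1 by linarith) with hlt | heq
          · refine klt_of_lt2 ?_ ?_ <;> simp only [K3, hx, hy, if_true, if_false]
            · exact_mod_cast congrArg (Nat.cast : ℕ → ℝ) e1
            · rw [if_pos e2]; exact hlt
          · refine klt_of_lt3 ?_ ?_ ?_ <;> simp only [K3, hx, hy, if_true, if_false]
            · exact_mod_cast congrArg (Nat.cast : ℕ → ℝ) e1
            · rw [if_pos e2]; exact heq
            · rw [if_pos e2]; norm_num
        · apply klt_of_lt1
          simp only [K3, hx, hy]
          have e1 : (tauf ST (a y)) / 2 < (tauf ST (a x)) / 2 := by omega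
          exact_mod_cast e1
    · -- point-point: must have equal values; tie broken oppositely in K1 and K2
      have h1 : a y ≤ a x := not_lt.mp (by simpa [hx] using hnxy)
      have h2 : a x ≤ a y := not_lt.mp (by simpa [hy] using hnyx)
      have hA : a y = a x := le_antisymm h1 h2
      rcases lt_or_gt_of_ne hk with hK | hK
      · left
        refine klt_of_lt3 ?_ ?_ ?_ <;> simp only [K1, hx, hy, if_false]
        · rw [hA]
        · exact hA
        · simpa using hK
      · right; left
        refine klt_of_lt4 ?_ ?_ ?_ ?_ <;> simp only [K2, hx, hy, if_false]
        · rw [hA]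
        · rw [hA]
        · exact hK

end Stmt8Aux


/-- `L` is a linear extension of the partial order on `α`. -/
def IsLinearExtension {α : Type*} [PartialOrder α] (L : α → α → Prop) : Prop :=
  IsLinearOrder α L ∧ ∀ x y : α, x ≤ y → L x y

/-- The order dimension of `α` is at most `t`. -/
def DimLE (α : Type*) [PartialOrder α] (t : ℕ) : Prop :=
  ∃ L : Fin t → α → α → Prop, (∀ i, IsLinearExtension (L i)) ∧
    ∀ x y : α, x ≤ y ↔ ∀ i, L i x y

/-- For any fixed positive real `c`, every finite interval order representable by
closed intervals each of length 0 or `c` has dimension at most 3. -/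
theorem stmt_8 {α : Type*} [Fintype α] [PartialOrder α] (c : ℝ) (hc : 0 < c)
    (h : ∃ l r : α → ℝ, (∀ x, r x - l x = 0 ∨ r x - l x = c) ∧
      ∀ x y : α, x < y ↔ r x < l y) :
    DimLE α 3 := by
  classical
  obtain ⟨l, r, hlen, hlt⟩ := h
  set a : α → ℝ := fun x => l x / c with ha
  set uu : α → Prop := fun x => r x - l x = c with huu
  set k : α → ℝ := fun x => ((Fintype.equivFin α x : ℕ) : ℝ) with hkdef
  have hkinj : Function.Injective k := by
    intro x y hxy
    have h2 : ((Fintype.equivFin α x : ℕ) : ℝ) = ((Fintype.equivFin α y : ℕ) : ℝ) := hxy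
    have h3 : (Fintype.equivFin α x : ℕ) = (Fintype.equivFin α y : ℕ) := by exact_mod_cast h2
    exact (Fintype.equivFin α).injective (Fin.ext h3)
  obtain ⟨ST, hSTsub, hsp, hcov0⟩ := Stmt8Aux.exists_ST ((Finset.univ.filter uu).image a)
  have hcov : ∀ x, uu x → ∃ s ∈ ST, s ≤ a x ∧ a x ≤ s + 1 := fun x hx =>
    hcov0 (a x) (Finset.mem_image_of_mem a (Finset.mem_filter.mpr ⟨Finset.mem_univ x, hx⟩))
  have hstrict : ∀ x y : α, x < y ↔ a x + (if uu x then (1:ℝ) else 0) < a y := by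
    intro x y
    rw [hlt]
    have key : ∀ z : α, (a z + (if uu z then (1:ℝ) else 0)) * c = r z := by
      intro z
      by_cases hz : uu z
      · have hz' : r z - l z = c := hz
        rw [if_pos hz]
        simp only [ha]
        rw [add_mul, div_mul_cancel₀ _ (ne_of_gt hc), one_mul]
        linarith
      · have hz' : r z - l z = 0 := by
          rcases hlen z with h0 | h0
          · exact h0
          · exact absurd h0 hz
        rw [if_neg hz]
        simp only [ha]
        rw [add_mul, zero_mul, div_mul_cancel₀ _ (ne_of_gt hc), add_zero]
        linarith
    have key2 : a y * c = l y := by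
      simp only [ha]; exact div_mul_cancel₀ _ (ne_of_gt hc)
    constructor
    · intro hr
      have := (mul_lt_mul_iff_of_pos_right hc).mpr (show r x < l y from hr)
      rw [← key x, ← key2] at hr
      exact (mul_lt_mul_iff_of_pos_right hc).mp hr
    · intro hr
      have := (mul_lt_mul_iff_of_pos_right hc).mpr hr
      rw [key x, key2] at this
      exact this
  let KF : Fin 3 → α → ℝ × ℝ × ℝ × ℝ := fun i => match i with
    | 0 => Stmt8Aux.K1 a uu k ST
    | 1 => Stmt8Aux.K2 a uu k ST
    | 2 => Stmt8Aux.K3 a uu k ST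
  have hmono : ∀ (i : Fin 3) (x y : α), x < y → Stmt8Aux.klt (KF i x) (KF i y) := by
    intro i x y hxy
    have hxy' := (hstrict x y).mp hxy
    fin_cases i
    · exact Stmt8Aux.keyE1 a uu k ST hcov hxy'
    · exact Stmt8Aux.keyE2 a uu k ST hcov hxy'
    · exact Stmt8Aux.keyE3 a uu k ST hcov hxy'
  have hinj : ∀ (i : Fin 3) (x y : α), KF i x = KF i y → x = y := by
    intro i x y hxy
    fin_cases i
    · have h2 : -(k x) = -(k y) := congrArg (fun p => p.2.2.1) hxy
      exact hkinj (neg_injective h2)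
    · exact hkinj (congrArg (fun p => p.2.2.2) hxy)
    · exact hkinj (congrArg (fun p => p.2.2.2) hxy)
  refine ⟨fun i x y => Stmt8Aux.klt (KF i x) (KF i y) ∨ x = y, fun i => ⟨?_, ?_⟩, ?_⟩
  · -- IsLinearOrder
    refine { refl := fun x => Or.inr rfl, trans := ?_, antisymm := ?_, total := ?_ }
    · rintro x y z (hxy | rfl) (hyz | rfl)
      · exact Or.inl (Stmt8Aux.klt_trans hxy hyz)
      · exact Or.inl hxy
      · exact Or.inl hyz
      · exact Or.inr rfl
    · rintro x y (hxy | rfl) h2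
      · rcases h2 with hyx | rfl
        · exact (Stmt8Aux.klt_asymm hxy hyx).elim
        · rfl
      · rfl
    · intro x y
      rcases Stmt8Aux.klt_trichotomy (KF i x) (KF i y) with h1 | h1 | h1
      · exact Or.inl (Or.inl h1)
      · exact Or.inl (Or.inr (hinj i x y h1))
      · exact Or.inr (Or.inl h1)
  · -- extends the partial order
    intro x y hle
    rcases lt_or_eq_of_le hle with hlt' | rfl
    · exact Or.inl (hmono i x y hlt')
    · exact Or.inr rfl
  · -- intersection is the order
    intro x y
    constructor
    · intro hle i
      rcases lt_or_eq_of_le hle with hlt' | rfl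
      · exact Or.inl (hmono i x y hlt')
      · exact Or.inr rfl
    · intro hall
      by_contra hnle
      have hne : x ≠ y := fun e => hnle (e ▸ le_refl x)
      have hnk : k x ≠ k y := fun e => hne (hkinj e)
      by_cases hyx : y < x
      · have hrev := hmono 0 y x hyx
        rcases hall 0 with hxy' | e
        · exact Stmt8Aux.klt_asymm hxy' hrev
        · exact hne e
      · have hnxy : ¬ (a x + (if uu x then (1:ℝ) else 0) < a y) := fun hcl =>
          hnle (le_of_lt ((hstrict x y).mpr hcl))
        have hnyx : ¬ (a y + (if uu y then (1:ℝ) else 0) < a x) := fun hcl =>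
          hyx ((hstrict y x).mpr hcl)
        rcases Stmt8Aux.keyC a uu k ST hsp hcov hnxy hnyx hnk with hr | hr | hr
        · rcases hall 0 with h' | e
          · exact Stmt8Aux.klt_asymm h' hr
          · exact hne e
        · rcases hall 1 with h' | e
          · exact Stmt8Aux.klt_asymm h' hr
          · exact hne e
        · rcases hall 2 with h' | e
          · exact Stmt8Aux.klt_asymm h' hr
          · exact hne e
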